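/- In the general weighted Hilbert–Schmidt Lie algebra, for any i, j and any N > max(i, j), the truncated Ricci curvature is R^N(ξ_{ij}) = (1/4)(6δ_{ij}λ_i⁴ − 4δ_{ij}λ_i⁴N − 2λ_i⁴N − 2λ_j⁴N + 2Σ_{m=1}^N λ_m⁴), where δ is Kronecker's delta. -/

import Mathlib

noncomputable section

open Filter
open scoped RealInnerProductSpace

variable {gi : Type*} [NormedAddCommGroup gi] [InnerProductSpace ℝ gi]

/-- Kronecker delta. -/
def kdel (a b : ℕ) : ℝ := if a = b then 1 else 0

/-- The Riemannian curvature tensor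
`R_{x y} w = ∇_{[x,y]} w − ∇_x ∇_y w + ∇_y ∇_x w` built from a Levi-Civita
connection `nab` and a Lie bracket `br`. -/
def Rc (nab br : gi →ₗ[ℝ] gi →ₗ[ℝ] gi) (x y w : gi) : gi :=
  nab (br x y) w - nab x (nab y w) + nab y (nab x w)

/-- The sectional curvature `K(x,y) = ⟪R_{x y} x, y⟫`. -/
def Ksec (nab br : gi →ₗ[ℝ] gi →ₗ[ℝ] gi) (x y : gi) : ℝ :=
  ⟪Rc nab br x y x, y⟫

/-- The truncated Ricci curvature `R^N(ξ_{ij}) = Σ_{k,m=1}^N K(ξ_{ij}, ξ_{km})`. -/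
def RicN (nab br : gi →ₗ[ℝ] gi →ₗ[ℝ] gi) (ξ : ℕ → ℕ → gi) (N i j : ℕ) : ℝ :=
  ∑ k ∈ Finset.Icc 1 N, ∑ m ∈ Finset.Icc 1 N, Ksec nab br (ξ i j) (ξ k m)

/-- The truncated self-adjoint Ricci curvature
`R̂^N(x) = Σ_{i,j=1}^N R_{ξ_{ij} x}(ξ_{ij})`. -/
def RicHat (nab br : gi →ₗ[ℝ] gi →ₗ[ℝ] gi) (ξ : ℕ → ℕ → gi) (N : ℕ) (x : gi) : gi :=
  ∑ i ∈ Finset.Icc 1 N, ∑ j ∈ Finset.Icc 1 N, Rc nab br (ξ i j) x (ξ i j)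

/-- Orthonormality, in product-of-deltas form. -/
theorem horth' (ξ : ℕ → ℕ → gi) (honb : Orthonormal ℝ (fun p : ℕ × ℕ => ξ p.1 p.2)) :
    ∀ a b c d : ℕ, ⟪ξ a b, ξ c d⟫ =
      (if a = c then (1:ℝ) else 0) * (if b = d then 1 else 0) := by
  intro a b c d
  have := (orthonormal_iff_ite (𝕜 := ℝ)).mp honb (a, b) (c, d)
  simp only [Prod.ext_iff] at this
  rw [this]
  split_ifs <;> simp_all

/-- Totality: vectors with equal inner products against all `ξ e f` agree. -/
theorem hzero' (ξ : ℕ → ℕ → gi)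
    (htot : Dense ((Submodule.span ℝ (Set.range fun p : ℕ × ℕ => ξ p.1 p.2) :
      Submodule ℝ gi) : Set gi)) (u v : gi)
    (h : ∀ e f : ℕ, ⟪u, ξ e f⟫ = ⟪v, ξ e f⟫) : u = v := by
  apply htot.eq_of_inner_left (𝕜 := ℝ)
  intro w hw
  rw [SetLike.mem_coe] at hw
  induction hw using Submodule.span_induction with
  | mem x hx => obtain ⟨p, rfl⟩ := hx; exact h p.1 p.2
  | zero => simp
  | add x y hx hy h1 h2 => simp [inner_add_right, h1, h2]
  | smul r x hx h1 => simp [inner_smul_right, h1]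

/-- The Levi-Civita connection on basis vectors. -/
theorem nabB (lam : ℕ → ℝ) (ξ : ℕ → ℕ → gi)
    (honb : Orthonormal ℝ (fun p : ℕ × ℕ => ξ p.1 p.2))
    (htot : Dense ((Submodule.span ℝ (Set.range fun p : ℕ × ℕ => ξ p.1 p.2) :
      Submodule ℝ gi) : Set gi))
    (br nab : gi →ₗ[ℝ] gi →ₗ[ℝ] gi)
    (hbr : ∀ i j k m : ℕ, br (ξ i j) (ξ k m) =
      (if j = k then (lam j) ^ 2 else 0) • ξ i m -
        (if i = m then (lam i) ^ 2 else 0) • ξ k j)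
    (hnab : ∀ x y z : gi,
      ⟪nab x y, z⟫ = (1 / 2) * (⟪br x y, z⟫ - ⟪br y z, x⟫ + ⟪br z x, y⟫))
    (a b c d : ℕ) :
    nab (ξ a b) (ξ c d) = (1/2 : ℝ) •
      ((br (ξ a b) (ξ c d))
       - ((if a = c then (lam d) ^ 2 else 0) • ξ d b -
          (if b = d then (lam c) ^ 2 else 0) • ξ a c)
       + ((if b = d then (lam a) ^ 2 else 0) • ξ c a -
          (if a = c then (lam b) ^ 2 else 0) • ξ b d)) := by
  have horth := horth' ξ honb
  apply hzero' ξ htot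
  intro e f
  have h2 : ⟪(if a = c then (lam d) ^ 2 else 0) • ξ d b -
      (if b = d then (lam c) ^ 2 else 0) • ξ a c, ξ e f⟫
      = ⟪br (ξ c d) (ξ e f), ξ a b⟫ := by
    rw [hbr c d e f]
    simp only [inner_sub_left, real_inner_smul_left, horth, mul_ite, ite_mul, mul_zero,
      zero_mul, mul_one, one_mul,
      @eq_comm ℕ c a, @eq_comm ℕ d b, @eq_comm ℕ e a, @eq_comm ℕ e b, @eq_comm ℕ e c,
      @eq_comm ℕ e d, @eq_comm ℕ f a, @eq_comm ℕ f b, @eq_comm ℕ f c, @eq_comm ℕ f d]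
    split_ifs <;> (try (exfalso; omega)) <;> (try subst_eqs) <;> ring
  have h3 : ⟪(if b = d then (lam a) ^ 2 else 0) • ξ c a -
      (if a = c then (lam b) ^ 2 else 0) • ξ b d, ξ e f⟫
      = ⟪br (ξ e f) (ξ a b), ξ c d⟫ := by
    rw [hbr e f a b]
    simp only [inner_sub_left, real_inner_smul_left, horth, mul_ite, ite_mul, mul_zero,
      zero_mul, mul_one, one_mul,
      @eq_comm ℕ c a, @eq_comm ℕ d b, @eq_comm ℕ e a, @eq_comm ℕ e b, @eq_comm ℕ e c,
      @eq_comm ℕ e d, @eq_comm ℕ f a, @eq_comm ℕ f b, @eq_comm ℕ f c, @eq_comm ℕ f d]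
    split_ifs <;> (try (exfalso; omega)) <;> (try subst_eqs) <;> ring
  rw [hnab, real_inner_smul_left, inner_add_left, inner_sub_left, h2, h3]
  try ring

set_option maxHeartbeats 3200000 in
/-- The sectional curvature on basis vectors, in closed delta form. -/
theorem KsecB (lam : ℕ → ℝ) (ξ : ℕ → ℕ → gi)
    (honb : Orthonormal ℝ (fun p : ℕ × ℕ => ξ p.1 p.2))
    (htot : Dense ((Submodule.span ℝ (Set.range fun p : ℕ × ℕ => ξ p.1 p.2) :
      Submodule ℝ gi) : Set gi))
    (br nab : gi →ₗ[ℝ] gi →ₗ[ℝ] gi)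
    (hbr : ∀ i j k m : ℕ, br (ξ i j) (ξ k m) =
      (if j = k then (lam j) ^ 2 else 0) • ξ i m -
        (if i = m then (lam i) ^ 2 else 0) • ξ k j)
    (hnab : ∀ x y z : gi,
      ⟪nab x y, z⟫ = (1 / 2) * (⟪br x y, z⟫ - ⟪br y z, x⟫ + ⟪br z x, y⟫))
    (i j k m : ℕ) :
    Ksec nab br (ξ i j) (ξ k m) =
      (if i = k then -((lam i)^4) + (1/4) * (lam j)^4 + (1/4) * (lam m)^4 else 0)
      + (if j = m then (1/4) * (lam i)^4 - (lam j)^4 + (1/4) * (lam k)^4 else 0)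
      + (if j = k then (1/4) * (lam j)^4 else 0)
      + (if i = m then (1/4) * (lam i)^4 else 0)
      + (if i = k then (if j = m then (1/2) * (lam i)^4 + (1/2) * (lam j)^4 else 0) else 0)
      + (if i = k then (if j = k then (if j = m then (3/2) * (lam i)^4 else 0) else 0) else 0)
      - (if i = k then (if j = k then (1/2) * (lam i)^4 else 0) else 0)
      - (if i = k then (if i = m then (1/2) * (lam i)^4 else 0) else 0)
      - (if j = k then (if j = m then (1/2) * (lam j)^4 else 0) else 0)
      - (if j = m then (if i = m then (1/2) * (lam i)^4 else 0) else 0) := by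
  have horth := horth' ξ honb
  have hB := nabB lam ξ honb htot br nab hbr hnab
  rw [Ksec, Rc]
  simp only [hbr, hB, map_sub, map_add, map_smul, LinearMap.sub_apply, LinearMap.add_apply,
    LinearMap.smul_apply, smul_sub, smul_add, smul_smul, inner_sub_left, inner_add_left,
    real_inner_smul_left, horth, mul_ite, ite_mul, mul_zero, zero_mul, mul_one, one_mul,
    sub_zero, zero_sub, add_zero, zero_add,
    @eq_comm ℕ j i, @eq_comm ℕ k i, @eq_comm ℕ k j, @eq_comm ℕ m i, @eq_comm ℕ m j,
    @eq_comm ℕ m k]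
  split_ifs <;> (try (exfalso; omega)) <;> (try subst_eqs) <;> ring

/-- In the general weighted Hilbert-Schmidt Lie algebra, for
indices i, j >= 1 and N > max i j, the truncated Ricci curvature equals
(1/4)(6 d_ij li^4 - 4 d_ij li^4 N - 2 li^4 N - 2 lj^4 N + 2 sum_m lm^4). -/
theorem stmt11 {gi : Type*} [NormedAddCommGroup gi] [InnerProductSpace ℝ gi]
    (lam : ℕ → ℝ) (hpos : ∀ i, 0 < lam i) (c : ℝ) (hbdd : ∀ i, lam i ≤ c)
    (ξ : ℕ → ℕ → gi) (honb : Orthonormal ℝ (fun p : ℕ × ℕ => ξ p.1 p.2))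
    (htot : Dense ((Submodule.span ℝ (Set.range fun p : ℕ × ℕ => ξ p.1 p.2) :
      Submodule ℝ gi) : Set gi))
    (br nab : gi →ₗ[ℝ] gi →ₗ[ℝ] gi)
    (hbr : ∀ i j k m : ℕ, br (ξ i j) (ξ k m) =
      (if j = k then (lam j) ^ 2 else 0) • ξ i m -
        (if i = m then (lam i) ^ 2 else 0) • ξ k j)
    (hnab : ∀ x y z : gi,
      ⟪nab x y, z⟫ = (1 / 2) * (⟪br x y, z⟫ - ⟪br y z, x⟫ + ⟪br z x, y⟫))
    (i j N : ℕ) (hi : 1 ≤ i) (hj : 1 ≤ j) (hN : max i j < N) :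
    RicN nab br ξ N i j =
      (1 / 4) * (6 * kdel i j * (lam i) ^ 4 - 4 * kdel i j * (lam i) ^ 4 * (N : ℝ) -
        2 * (lam i) ^ 4 * (N : ℝ) - 2 * (lam j) ^ 4 * (N : ℝ) +
        2 * ∑ m ∈ Finset.Icc 1 N, (lam m) ^ 4) := by
  have hK := KsecB lam ξ honb htot br nab hbr hnab i j
  have hiN : i ∈ Finset.Icc 1 N := by
    simp only [Finset.mem_Icc]; omega
  have hjN : j ∈ Finset.Icc 1 N := by
    simp only [Finset.mem_Icc]; omega
  rw [RicN]
  simp only [hK]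
  simp only [Finset.sum_add_distrib, Finset.sum_sub_distrib, Finset.sum_ite_irrel,
    Finset.sum_ite_eq, Finset.sum_const_zero, hiN, hjN, if_true, Finset.sum_const,
    Nat.card_Icc, Nat.add_sub_cancel, nsmul_eq_mul]
  rw [kdel]
  rcases eq_or_ne i j with rfl | hij
  · simp only [eq_self_iff_true, if_true, ite_true, ← Finset.sum_mul, ← Finset.mul_sum]
    ring
  · simp only [if_neg hij, if_neg (Ne.symm hij), eq_self_iff_true, if_true, ite_true,
      ← Finset.sum_mul, ← Finset.mul_sum]
    ring
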